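/- For every Boolean-valued function f: {±1}^L → {±1}, the total influence I(f) satisfies I(f) ≥ 2α·log₂(1/α), where α = min{Pr[f = 1], Pr[f = −1]} under the uniform distribution. -/

import Mathlib

open Finset Real
open Real

lemma le_logb_one_add {t : ℝ} (h0 : 0 ≤ t) (h1 : t ≤ 1) : t ≤ logb 2 (1 + t) := by
  have hexp : exp (t * log 2) ≤ 1 + t := by
    have hc := convexOn_exp.2 (Set.mem_univ (0:ℝ)) (Set.mem_univ (log 2))
      (by linarith : (0:ℝ) ≤ 1 - t) h0 (by ring)
    simp only [smul_eq_mul, mul_zero, zero_add, exp_zero, exp_log two_pos] at hc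
    calc exp (t * log 2) ≤ (1 - t) * 1 + t * 2 := hc
    _ = 1 + t := by ring
  have hlog : t * log 2 ≤ log (1 + t) := by
    have := Real.log_le_log (exp_pos _) hexp
    rwa [log_exp] at this
  rw [logb, le_div_iff₀ (log_pos one_lt_two)]
  exact hlog

lemma key_aux {a b : ℝ} (ha : 0 ≤ a) (hab : a ≤ b) :
    a * logb 2 a + b * logb 2 b + 2 * a ≤ (a + b) * logb 2 (a + b) := by
  rcases eq_or_lt_of_le ha with h0 | hapos
  · simp [← h0]
  have hbpos : 0 < b := lt_of_lt_of_le hapos hab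
  have habpos : 0 < a + b := by linarith
  have h1 : a * (1 + logb 2 a) ≤ a * logb 2 (a + b) := by
    apply mul_le_mul_of_nonneg_left _ ha
    have : logb 2 (2 * a) ≤ logb 2 (a + b) :=
      logb_le_logb_of_le one_lt_two (by linarith) (by linarith)
    rwa [logb_mul (by norm_num) (ne_of_gt hapos), logb_self_eq_one one_lt_two] at this
  have h2 : b * logb 2 b + a ≤ b * logb 2 (a + b) := by
    have ht0 : 0 ≤ a / b := div_nonneg ha hbpos.le
    have ht1 : a / b ≤ 1 := (div_le_one hbpos).mpr hab
    have := le_logb_one_add ht0 ht1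
    have h3 : b * (a / b) ≤ b * logb 2 (1 + a / b) := mul_le_mul_of_nonneg_left this hbpos.le
    rw [mul_div_cancel₀ _ (ne_of_gt hbpos)] at h3
    have h4 : logb 2 (a + b) = logb 2 b + logb 2 (1 + a / b) := by
      rw [← logb_mul (ne_of_gt hbpos) (by positivity), mul_add, mul_one, mul_div_cancel₀ _ (ne_of_gt hbpos)]
      ring_nf
    rw [h4]; nlinarith
  nlinarith

lemma key_real {a b : ℝ} (ha : 0 ≤ a) (hb : 0 ≤ b) :
    a * logb 2 a + b * logb 2 b + 2 * min a b ≤ (a + b) * logb 2 (a + b) := by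
  rcases le_total a b with h | h
  · rw [min_eq_left h]; exact key_aux ha h
  · rw [min_eq_right h]
    have := key_aux hb h
    linarith [this, (by ring_nf : (b + a) * logb 2 (b + a) = (a + b) * logb 2 (a + b))]

lemma card_filter_split {L : ℕ} (P : (Fin (L+1) → Bool) → Prop) [DecidablePred P] :
    (univ.filter P).card
      = (univ.filter fun x : Fin L → Bool => P (Fin.cons false x)).card
      + (univ.filter fun x : Fin L → Bool => P (Fin.cons true x)).card := by
  classical
  rw [Finset.card_filter, Finset.card_filter, Finset.card_filter]
  rw [← Equiv.sum_comp (Fin.consEquiv fun _ => Bool) (fun y => if P y then 1 else 0)]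
  rw [Fintype.sum_prod_type, Fintype.sum_bool]
  simp only [Fin.consEquiv, Equiv.coe_fn_mk]
  exact Nat.add_comm _ _

lemma update_flip_flip {L : ℕ} (x : Fin L → Bool) (i : Fin L) :
    Function.update (Function.update x i (!x i)) i
      (!(Function.update x i (!x i)) i) = x := by
  simp [Function.update_self, Function.update_idem]

lemma main_bound : ∀ (L : ℕ) (P : (Fin L → Bool) → Prop) [DecidablePred P],
    ((∑ i : Fin L,
        (univ.filter fun x => P x ∧ P (Function.update x i (!x i))).card : ℕ) : ℝ)
      ≤ ((univ.filter P).card : ℝ) * logb 2 ((univ.filter P).card : ℝ) := by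
  intro L
  induction L with
  | zero =>
    intro P _
    have hs : (∑ i : Fin 0,
        (univ.filter fun x => P x ∧ P (Function.update x i (!x i))).card) = 0 := rfl
    rw [hs, Nat.cast_zero]
    rcases Nat.eq_zero_or_pos (univ.filter P).card with h | h
    · rw [h]; simp
    · have h1 : (1:ℝ) ≤ ((univ.filter P).card : ℝ) := by exact_mod_cast h
      exact mul_nonneg (by positivity) (Real.logb_nonneg (by norm_num) h1)
  | succ L ih =>
    intro P _
    classical
    set c0 := (univ.filter fun x : Fin L → Bool => P (Fin.cons false x)).card with hc0
    set c1 := (univ.filter fun x : Fin L → Bool => P (Fin.cons true x)).card with hc1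
    have hsplit : (univ.filter P).card = c0 + c1 := card_filter_split P
    -- the i = 0 term
    have hzero : (univ.filter fun y : Fin (L+1) → Bool =>
          P y ∧ P (Function.update y 0 (!y 0))).card
        = (univ.filter fun x : Fin L → Bool =>
            P (Fin.cons false x) ∧ P (Fin.cons true x)).card
        + (univ.filter fun x : Fin L → Bool =>
            P (Fin.cons true x) ∧ P (Fin.cons false x)).card := by
      rw [card_filter_split]
      congr 1 <;> · congr 1; apply Finset.filter_congr; intro x _
                    simp [Fin.cons_zero, Fin.update_cons_zero]
    have hswap : (univ.filter fun x : Fin L → Bool =>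
            P (Fin.cons true x) ∧ P (Fin.cons false x)).card
        = (univ.filter fun x : Fin L → Bool =>
            P (Fin.cons false x) ∧ P (Fin.cons true x)).card := by
      congr 1; apply Finset.filter_congr; intro x _; exact and_comm
    -- the succ terms
    have hsucc : ∀ j : Fin L, (univ.filter fun y : Fin (L+1) → Bool =>
          P y ∧ P (Function.update y j.succ (!y j.succ))).card
        = (univ.filter fun x : Fin L → Bool =>
            P (Fin.cons false x) ∧ P (Fin.cons false (Function.update x j (!x j)))).card
        + (univ.filter fun x : Fin L → Bool =>
            P (Fin.cons true x) ∧ P (Fin.cons true (Function.update x j (!x j)))).card := by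
      intro j
      rw [card_filter_split]
      congr 1 <;> · congr 1; apply Finset.filter_congr; intro x _
                    simp [Fin.cons_succ, ← Fin.cons_update]
    set I := (univ.filter fun x : Fin L → Bool =>
        P (Fin.cons false x) ∧ P (Fin.cons true x)).card with hI
    have hI0 : I ≤ c0 := Finset.card_le_card (by
      intro x hx; simp only [Finset.mem_filter] at hx ⊢; exact ⟨hx.1, hx.2.1⟩)
    have hI1 : I ≤ c1 := Finset.card_le_card (by
      intro x hx; simp only [Finset.mem_filter] at hx ⊢; exact ⟨hx.1, hx.2.2⟩)
    have hsum : (∑ i : Fin (L+1),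
          (univ.filter fun x => P x ∧ P (Function.update x i (!x i))).card)
        = 2 * I
        + ((∑ j : Fin L, (univ.filter fun x : Fin L → Bool =>
            P (Fin.cons false x) ∧ P (Fin.cons false (Function.update x j (!x j)))).card)
        + (∑ j : Fin L, (univ.filter fun x : Fin L → Bool =>
            P (Fin.cons true x) ∧ P (Fin.cons true (Function.update x j (!x j)))).card)) := by
      rw [Fin.sum_univ_succ, hzero, hswap,
        Finset.sum_congr rfl (fun j _ => hsucc j), Finset.sum_add_distrib]
      ring
    rw [hsum, hsplit]
    have ihf := ih (fun x => P (Fin.cons false x))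
    have iht := ih (fun x => P (Fin.cons true x))
    rw [← hc0] at ihf
    rw [← hc1] at iht
    have hkey := key_real (Nat.cast_nonneg c0) (Nat.cast_nonneg c1)
    have hImin : (I:ℝ) ≤ min (c0:ℝ) (c1:ℝ) :=
      le_min (by exact_mod_cast hI0) (by exact_mod_cast hI1)
    push_cast
    push_cast at ihf iht
    linarith [ihf, iht, hkey, hImin]
lemma half_bound (L : ℕ) (p : (Fin L → Bool) → Prop) [DecidablePred p] :
    2 * ((univ.filter p).card : ℝ) * (L - logb 2 ((univ.filter p).card : ℝ))
      ≤ ∑ i : Fin L,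
          ((univ.filter fun x => ¬ (p x ↔ p (Function.update x i (!x i)))).card : ℝ) := by
  classical
  set c := (univ.filter p).card with hc
  have hper : ∀ i : Fin L,
      ((univ.filter fun x => ¬ (p x ↔ p (Function.update x i (!x i)))).card : ℝ)
      = 2 * (c : ℝ)
        - 2 * ((univ.filter fun x => p x ∧ p (Function.update x i (!x i))).card : ℝ) := by
    intro i
    have hbij : (univ.filter fun x => ¬ p x ∧ p (Function.update x i (!x i))).card
        = (univ.filter fun x => p x ∧ ¬ p (Function.update x i (!x i))).card := by
      refine Finset.card_bij' (fun x _ => Function.update x i (!x i))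
        (fun x _ => Function.update x i (!x i)) ?_ ?_ ?_ ?_
      · intro a ha
        simp only [Finset.mem_filter, Finset.mem_univ, true_and] at ha ⊢
        rw [update_flip_flip]
        exact ⟨ha.2, ha.1⟩
      · intro a ha
        simp only [Finset.mem_filter, Finset.mem_univ, true_and] at ha ⊢
        rw [update_flip_flip]
        exact ⟨ha.2, ha.1⟩
      · intro a _; exact update_flip_flip a i
      · intro a _; exact update_flip_flip a i
    have hsplit2 : (univ.filter fun x => ¬ (p x ↔ p (Function.update x i (!x i)))).card
        = (univ.filter fun x => p x ∧ ¬ p (Function.update x i (!x i))).card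
        + (univ.filter fun x => ¬ p x ∧ p (Function.update x i (!x i))).card := by
      rw [← Finset.card_union_of_disjoint, ← Finset.filter_or]
      · congr 1; apply Finset.filter_congr; intro x _; tauto
      · rw [Finset.disjoint_left]
        intro a ha hb
        simp only [Finset.mem_filter] at ha hb
        exact hb.2.1 ha.2.1
    have hcompl : (univ.filter fun x => p x ∧ p (Function.update x i (!x i))).card
        + (univ.filter fun x => p x ∧ ¬ p (Function.update x i (!x i))).card = c := by
      rw [hc, ← Finset.filter_filter, ← Finset.filter_filter]
      exact Finset.card_filter_add_card_filter_not _
    rw [hsplit2, hbij]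
    push_cast
    have := hcompl
    have h2 : ((univ.filter fun x => p x ∧ p (Function.update x i (!x i))).card : ℝ)
        + ((univ.filter fun x => p x ∧ ¬ p (Function.update x i (!x i))).card : ℝ) = c := by
      exact_mod_cast hcompl
    linarith [h2]
  rw [Finset.sum_congr rfl (fun i (_ : i ∈ univ) => hper i), Finset.sum_sub_distrib,
    Finset.sum_const, Finset.card_univ, Fintype.card_fin, ← Finset.mul_sum]
  have hmb := main_bound L p
  push_cast at hmb
  rw [← hc] at hmb
  have : (∑ i : Fin L,
      ((univ.filter fun x => p x ∧ p (Function.update x i (!x i))).card : ℝ))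
      ≤ (c : ℝ) * logb 2 (c : ℝ) := hmb
  rw [nsmul_eq_mul]
  nlinarith [this]

lemma ratio_bound (L : ℕ) (p : (Fin L → Bool) → Prop) [DecidablePred p]
    (f : (Fin L → Bool) → Bool)
    (hp : ∀ i : Fin L, (univ.filter fun x => f x ≠ f (Function.update x i (!x i)))
        = (univ.filter fun x => ¬ (p x ↔ p (Function.update x i (!x i))))) :
    2 * ((univ.filter p).card : ℝ) * (L - logb 2 ((univ.filter p).card : ℝ)) / 2 ^ L
      ≤ ∑ i : Fin L,
          (((univ.filter fun x => f x ≠ f (Function.update x i (!x i))).card : ℝ) / 2 ^ L) := by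
  rw [← Finset.sum_div]
  apply div_le_div_of_nonneg_right ?_ (by positivity)
  · calc 2 * ((univ.filter p).card : ℝ) * (L - logb 2 ((univ.filter p).card : ℝ))
        ≤ ∑ i : Fin L,
          ((univ.filter fun x => ¬ (p x ↔ p (Function.update x i (!x i)))).card : ℝ) :=
        half_bound L p
    _ = _ := by
        apply Finset.sum_congr rfl
        intro i _
        rw [hp i]

theorem stmt_8 (L : ℕ) (f : (Fin L → Bool) → Bool) :
    2 * min (((Finset.univ.filter fun x : Fin L → Bool => f x = true).card : ℝ) / 2 ^ L)
            (((Finset.univ.filter fun x : Fin L → Bool => f x = false).card : ℝ) / 2 ^ L)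
      * Real.logb 2
          (1 / min (((Finset.univ.filter fun x : Fin L → Bool => f x = true).card : ℝ) / 2 ^ L)
                   (((Finset.univ.filter fun x : Fin L → Bool => f x = false).card : ℝ) / 2 ^ L))
      ≤ ∑ i : Fin L,
          (((Finset.univ.filter fun x : Fin L → Bool =>
              f x ≠ f (Function.update x i (!x i))).card : ℝ) / 2 ^ L) := by
  classical
  have hT : ∀ i : Fin L, (univ.filter fun x => f x ≠ f (Function.update x i (!x i)))
      = (univ.filter fun x => ¬ ((f x = true) ↔ (f (Function.update x i (!x i)) = true))) := by
    intro i
    apply Finset.filter_congr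
    intro x _
    cases h1 : f x <;> cases h2 : f (Function.update x i (!x i)) <;> simp [h1, h2]
  have hF : ∀ i : Fin L, (univ.filter fun x => f x ≠ f (Function.update x i (!x i)))
      = (univ.filter fun x => ¬ ((f x = false) ↔ (f (Function.update x i (!x i)) = false))) := by
    intro i
    apply Finset.filter_congr
    intro x _
    cases h1 : f x <;> cases h2 : f (Function.update x i (!x i)) <;> simp [h1, h2]
  set cT := (univ.filter fun x : Fin L → Bool => f x = true).card with hcT
  set cF := (univ.filter fun x : Fin L → Bool => f x = false).card with hcF
  have hbT := ratio_bound L (fun x => f x = true) f hT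
  have hbF := ratio_bound L (fun x => f x = false) f hF
  rw [← hcT] at hbT
  rw [← hcF] at hbF
  have hRHSnn : (0:ℝ) ≤ ∑ i : Fin L,
      (((univ.filter fun x : Fin L → Bool =>
          f x ≠ f (Function.update x i (!x i))).card : ℝ) / 2 ^ L) := by
    apply Finset.sum_nonneg
    intro i _
    positivity
  have hpow : (0:ℝ) < 2 ^ L := by positivity
  -- helper for each case
  have key : ∀ c : ℕ,
      (2 * ((c:ℝ)) * ((L:ℝ) - logb 2 (c:ℝ)) / 2 ^ L
        ≤ ∑ i : Fin L, (((univ.filter fun x : Fin L → Bool =>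
            f x ≠ f (Function.update x i (!x i))).card : ℝ) / 2 ^ L)) →
      2 * ((c:ℝ) / 2 ^ L) * logb 2 (1 / ((c:ℝ) / 2 ^ L))
        ≤ ∑ i : Fin L, (((univ.filter fun x : Fin L → Bool =>
            f x ≠ f (Function.update x i (!x i))).card : ℝ) / 2 ^ L) := by
    intro c hb
    rcases Nat.eq_zero_or_pos c with h0 | hpos
    · rw [h0]
      simpa using hRHSnn
    · have hcpos : (0:ℝ) < (c:ℝ) := by exact_mod_cast hpos
      have hlogb : logb 2 (1 / ((c:ℝ) / 2 ^ L)) = (L:ℝ) - logb 2 (c:ℝ) := by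
        rw [one_div, Real.logb_inv, Real.logb_div (ne_of_gt hcpos) (ne_of_gt hpow),
          Real.logb_pow, Real.logb_self_eq_one one_lt_two]
        ring
      rw [hlogb]
      calc 2 * ((c:ℝ) / 2 ^ L) * ((L:ℝ) - logb 2 (c:ℝ))
          = 2 * (c:ℝ) * ((L:ℝ) - logb 2 (c:ℝ)) / 2 ^ L := by ring
        _ ≤ _ := hb
  rcases le_total ((cT:ℝ) / 2 ^ L) ((cF:ℝ) / 2 ^ L) with h | h
  · rw [min_eq_left h]
    exact key cT hbT
  · rw [min_eq_right h]
    exact key cF hbF
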